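/- Let a_1, …, a_n be integers with each a_i ≥ 2, and set p = K(a_1,…,a_n) and q = K(a_2,…,a_n). Then the string (a_1,…,a_n) is self-complementary if and only if q² ≡ −1 (mod p). -/

import Mathlib

/-- The negative continuant `K(a₁,…,aₙ)`, defined by `K() = 1`, `K(a) = a`, and
`K(a₁,a₂,…,aₙ) = a₁·K(a₂,…,aₙ) − K(a₃,…,aₙ)`. -/
def negCont : List ℤ → ℤ
  | [] => 1
  | [a] => a
  | a :: b :: l => a * negCont (b :: l) - negCont l

/-- A 2-final expansion of a pair of integer strings: it transforms
`((a₁,…,aₙ),(b₁,…,bₘ))` into either `((a₁+1,a₂,…,aₙ),(b₁,…,bₘ,2))` or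
`((2,a₁,…,aₙ),(b₁,…,bₘ₋₁,bₘ+1))`. -/
def TwoFinalExp : List ℤ × List ℤ → List ℤ × List ℤ → Prop := fun P Q =>
  (∃ (a : ℤ) (A B : List ℤ), P = (a :: A, B) ∧ Q = ((a + 1) :: A, B ++ [2])) ∨
  (∃ (A B : List ℤ) (b : ℤ), P = (A, B ++ [b]) ∧ Q = (2 :: A, B ++ [b + 1]))

/-- A pair of integer strings is complementary if it is obtained from the pair
`((2),(2))` by a finite (possibly empty) sequence of 2-final expansions. -/
def Complementary (A B : List ℤ) : Prop :=
  Relation.ReflTransGen TwoFinalExp ([2], [2]) (A, B)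

/-- The 2×2-matrix of continuants `(K l, K (dropLast l), K (tail l), K (tail (dropLast l)))`. -/
def nc4 : List ℤ → ℤ × ℤ × ℤ × ℤ
  | [] => (1, 0, 0, -1)
  | a :: l => (a * (nc4 l).1 - (nc4 l).2.2.1, a * (nc4 l).2.1 - (nc4 l).2.2.2,
               (nc4 l).1, (nc4 l).2.1)

lemma nc4_cons (a : ℤ) (l : List ℤ) :
    nc4 (a :: l) = (a * (nc4 l).1 - (nc4 l).2.2.1, a * (nc4 l).2.1 - (nc4 l).2.2.2,
      (nc4 l).1, (nc4 l).2.1) := rfl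

lemma nc4_spec : ∀ l : List ℤ,
    (nc4 l).1 = negCont l ∧ (nc4 l).2.2.1 = (if l = [] then 0 else negCont l.tail) := by
  intro l
  induction l with
  | nil => simp [nc4, negCont]
  | cons a l ih =>
    obtain ⟨h1, h2⟩ := ih
    refine ⟨?_, by simpa [nc4_cons] using h1⟩
    cases l with
    | nil => simp [nc4, negCont]
    | cons b m =>
      simp only [nc4_cons] at h1 h2 ⊢
      simp only [List.cons_ne_nil, if_false, List.tail_cons] at h2
      rw [h1, h2]
      rfl

lemma nc4_p (l : List ℤ) : (nc4 l).1 = negCont l := (nc4_spec l).1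

lemma nc4_q (l : List ℤ) (h : l ≠ []) : (nc4 l).2.2.1 = negCont l.tail := by
  simpa [h] using (nc4_spec l).2

lemma nc4_snoc (l : List ℤ) (b : ℤ) :
    nc4 (l ++ [b]) = (b * (nc4 l).1 - (nc4 l).2.1, (nc4 l).1,
      b * (nc4 l).2.2.1 - (nc4 l).2.2.2, (nc4 l).2.2.1) := by
  induction l with
  | nil => simp [nc4]
  | cons a l ih =>
    simp only [List.cons_append, nc4_cons, ih, Prod.mk.injEq]
    and_intros <;> first | ring | trivial

lemma nc4_det : ∀ l : List ℤ,
    (nc4 l).2.1 * (nc4 l).2.2.1 - (nc4 l).1 * (nc4 l).2.2.2 = 1 := by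
  intro l
  induction l with
  | nil => simp [nc4]
  | cons a l ih =>
    simp only [nc4_cons]
    linear_combination ih

lemma nc4_bounds : ∀ l : List ℤ, l ≠ [] → (∀ x ∈ l, 2 ≤ x) →
    1 ≤ (nc4 l).2.2.1 ∧ (nc4 l).2.2.1 < (nc4 l).1 ∧ 1 ≤ (nc4 l).2.1 ∧ (nc4 l).2.1 < (nc4 l).1 ∧
    0 ≤ (nc4 l).2.2.2 ∧ (nc4 l).2.2.2 < (nc4 l).2.2.1 ∧ (nc4 l).2.2.2 < (nc4 l).2.1 ∧
    (nc4 l).2.2.1 - (nc4 l).2.2.2 ≤ (nc4 l).1 - (nc4 l).2.1 := by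
  intro l
  induction l with
  | nil => simp
  | cons a l ih =>
    intro _ h2
    have ha : 2 ≤ a := h2 a (by simp)
    cases l with
    | nil =>
      simp only [nc4_cons, nc4]
      norm_num
      omega
    | cons c m =>
      obtain ⟨h1, h2', h3, h4, h5, h6, h7, h8⟩ :=
        ih (by simp) (fun x hx => h2 x (List.mem_cons_of_mem a hx))
      set p := (nc4 (c :: m)).1 with hp
      set r := (nc4 (c :: m)).2.1 with hr
      set q := (nc4 (c :: m)).2.2.1 with hq
      set t := (nc4 (c :: m)).2.2.2 with ht
      rw [nc4_cons a (c :: m), ← hp, ← hr, ← hq, ← ht]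
      have k1 : 0 ≤ (a - 2) * (p - r) := mul_nonneg (by linarith) (by linarith)
      have k2 : 0 ≤ (a - 2) * r := mul_nonneg (by linarith) (by linarith)
      have k3 : 0 ≤ (a - 2) * p := mul_nonneg (by linarith) (by linarith)
      dsimp only
      and_intros <;> nlinarith [k1, k2, k3]

lemma comp_inv {P : List ℤ × List ℤ} (h : Relation.ReflTransGen TwoFinalExp ([2], [2]) P) :
    P.1 ≠ [] ∧ P.2 ≠ [] ∧ (∀ x ∈ P.1, 2 ≤ x) ∧ (∀ x ∈ P.2, 2 ≤ x) ∧
    (nc4 P.2).1 = (nc4 P.1).1 ∧ (nc4 P.1).2.2.1 + (nc4 P.2).2.1 = (nc4 P.1).1 := by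
  induction h with
  | refl => refine ⟨by simp, by simp, ?_, ?_, rfl, ?_⟩ <;> simp [nc4]
  | tail hs hstep ih =>
    rcases hstep with ⟨a, A, B, rfl, rfl⟩ | ⟨A, B, b, rfl, rfl⟩
    · obtain ⟨hA, hB, h2A, h2B, hEq, hInv⟩ := ih
      simp only [nc4_cons, nc4_snoc] at hEq hInv ⊢
      have ha : 2 ≤ a := h2A a List.mem_cons_self
      refine ⟨by simp, by simp, ?_, ?_, ?_, ?_⟩
      · intro x hx
        rcases List.mem_cons.1 hx with rfl | hx
        · linarith
        · exact h2A x (List.mem_cons_of_mem _ hx)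
      · intro x hx
        rcases List.mem_append.1 hx with hx | hx
        · exact h2B x hx
        · simp at hx; omega
      · ring_nf; ring_nf at hEq hInv; linarith
      · ring_nf; ring_nf at hEq hInv; linarith
    · obtain ⟨hA, hB, h2A, h2B, hEq, hInv⟩ := ih
      simp only [nc4_cons, nc4_snoc] at hEq hInv ⊢
      have hb : 2 ≤ b := h2B b (by simp)
      refine ⟨by simp, by simp, ?_, ?_, ?_, ?_⟩
      · intro x hx
        rcases List.mem_cons.1 hx with rfl | hx
        · linarith
        · exact h2A x hx
      · intro x hx
        rcases List.mem_append.1 hx with hx | hx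
        · exact h2B x (List.mem_append_left _ hx)
        · simp at hx; have := h2B b (by simp); omega
      · ring_nf; ring_nf at hEq hInv; linarith
      · ring_nf; ring_nf at hEq hInv; linarith

lemma star : ∀ n : ℕ, ∀ A B : List ℤ, (nc4 A).1 ≤ (n : ℤ) → A ≠ [] → B ≠ [] →
    (∀ x ∈ A, 2 ≤ x) → (∀ x ∈ B, 2 ≤ x) → (nc4 B).1 = (nc4 A).1 →
    (nc4 A).2.2.1 + (nc4 B).2.1 = (nc4 A).1 → Complementary A B := by
  intro n
  induction n with
  | zero =>
    intro A B hn hA hB h2A h2B _ _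
    obtain ⟨h1, h2, -⟩ := nc4_bounds A hA h2A
    norm_num at hn; linarith
  | succ n ih =>
    intro A B hn hA hB h2A h2B hEq hInv
    obtain ⟨hqA1, hqAp, -, -, -, -, -, -⟩ := nc4_bounds A hA h2A
    obtain ⟨-, -, hrB1, hrBp, -, -, -, -⟩ := nc4_bounds B hB h2B
    cases A with
    | nil => exact absurd rfl hA
    | cons a A₀ =>
    obtain ⟨B₀, b, rfl⟩ := (List.eq_nil_or_concat B).resolve_left hB
    simp only [List.concat_eq_append] at hB h2B hrB1 hrBp hEq hInv ⊢
    have ha : 2 ≤ a := h2A a List.mem_cons_self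
    have hb : 2 ≤ b := h2B b (by simp)
    have h2A₀ : ∀ x ∈ A₀, 2 ≤ x := fun x hx => h2A x (List.mem_cons_of_mem _ hx)
    have h2B₀ : ∀ x ∈ B₀, 2 ≤ x := fun x hx => h2B x (by simp [hx])
    -- facts about A₀, B₀
    have hA₀f : (nc4 A₀).2.2.1 < (nc4 A₀).1 ∧
        (A₀ = [] → (nc4 A₀).1 = 1 ∧ (nc4 A₀).2.2.1 = 0) ∧
        (A₀ ≠ [] → 1 ≤ (nc4 A₀).2.2.1 ∧ 2 ≤ (nc4 A₀).1) := by
      cases A₀ with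
      | nil => exact ⟨by norm_num [nc4], fun _ => by norm_num [nc4], by simp⟩
      | cons c m =>
        obtain ⟨k1, k2, -, -, -, -, -, -⟩ := nc4_bounds (c :: m) (by simp) h2A₀
        exact ⟨k2, by simp, fun _ => ⟨k1, by linarith⟩⟩
    have hB₀f : (nc4 B₀).2.1 < (nc4 B₀).1 ∧ 0 ≤ (nc4 B₀).2.1 ∧
        (B₀ = [] → (nc4 B₀).1 = 1 ∧ (nc4 B₀).2.1 = 0) ∧
        (B₀ ≠ [] → 1 ≤ (nc4 B₀).2.1 ∧ 2 ≤ (nc4 B₀).1) := by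
      cases B₀ with
      | nil => exact ⟨by norm_num [nc4], by norm_num [nc4], fun _ => by norm_num [nc4], by simp⟩
      | cons c m =>
        obtain ⟨-, -, k1, k2, -, -, -, -⟩ := nc4_bounds (c :: m) (by simp) h2B₀
        exact ⟨k2, by linarith, by simp, fun _ => ⟨k1, by linarith⟩⟩
    obtain ⟨hq0p0, hA₀nil, hA₀cons⟩ := hA₀f
    obtain ⟨hrbpb, hrb0, hB₀nil, hB₀cons⟩ := hB₀f
    rw [nc4_cons] at hEq hInv hqA1 hqAp hn
    rw [nc4_snoc] at hEq hInv hrB1 hrBp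
    dsimp only at hEq hInv hqA1 hqAp hn hrB1 hrBp
    push_cast at hn
    -- hEq : b * pb - rb = a * p₀ - q₀ ; hInv : p₀ + pb = a * p₀ - q₀
    have hp2 : 2 ≤ a * (nc4 A₀).1 - (nc4 A₀).2.2.1 := by linarith
    rcases eq_or_lt_of_le hp2 with hp2' | hp3
    · -- p = 2 : base case, A = B = [2]
      have hA₀e : A₀ = [] := by
        by_contra hne
        obtain ⟨k1, k2⟩ := hA₀cons hne
        linarith
      have hB₀e : B₀ = [] := by
        by_contra hne
        obtain ⟨k1, k2⟩ := hB₀cons hne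
        linarith
      obtain ⟨e1, e2⟩ := hA₀nil hA₀e
      obtain ⟨e3, e4⟩ := hB₀nil hB₀e
      rw [e1, e2] at hp2'
      rw [e3, e4, e1, e2] at hEq
      have : a = 2 := by linarith
      have hbv : b = 2 := by linarith
      subst hA₀e hB₀e this hbv
      exact Relation.ReflTransGen.refl
    · -- p ≥ 3
      have hcase : a = 2 ∨ 3 ≤ a := by omega
      rcases hcase with rfl | ha3
      · -- a = 2, so b ≥ 3, use second kind of expansion backwards
        have hA₀ne : A₀ ≠ [] := by
          intro hne
          obtain ⟨e1, e2⟩ := hA₀nil hne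
          rw [e1, e2] at hp3; norm_num at hp3
        obtain ⟨hq₀1, hp₀2⟩ := hA₀cons hA₀ne
        have hb3 : 3 ≤ b := by
          rcases (by omega : b = 2 ∨ 3 ≤ b) with rfl | h
          · linarith
          · exact h
        have step : TwoFinalExp (A₀, B₀ ++ [b - 1]) (2 :: A₀, B₀ ++ [b]) := by
          right
          exact ⟨A₀, B₀, b - 1, rfl, by norm_num⟩
        refine Relation.ReflTransGen.tail (ih A₀ (B₀ ++ [b - 1]) ?_ hA₀ne (by simp) h2A₀ ?_ ?_ ?_) step
        · linarith
        · intro x hx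
          rcases List.mem_append.1 hx with hx | hx
          · exact h2B₀ x hx
          · simp at hx; omega
        · rw [nc4_snoc]; dsimp only; ring_nf; ring_nf at hEq hInv; linarith
        · rw [nc4_snoc]; dsimp only; linarith
      · -- a ≥ 3, so b = 2, use first kind of expansion backwards
        have h2p₀ : 2 * (nc4 A₀).1 < a * (nc4 A₀).1 - (nc4 A₀).2.2.1 := by
          nlinarith [mul_nonneg (by linarith : (0:ℤ) ≤ a - 3) (by linarith : (0:ℤ) ≤ (nc4 A₀).1)]
        have hbv : b = 2 := by
          rcases (by omega : b = 2 ∨ 3 ≤ b) with rfl | h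
          · rfl
          · exfalso
            have : 2 * (nc4 B₀).1 < b * (nc4 B₀).1 - (nc4 B₀).2.1 := by
              nlinarith [mul_nonneg (by linarith : (0:ℤ) ≤ b - 3) (by linarith : (0:ℤ) ≤ (nc4 B₀).1)]
            linarith
        subst hbv
        have hB₀ne : B₀ ≠ [] := by
          intro hne
          obtain ⟨e1, e2⟩ := hB₀nil hne
          rw [e1, e2] at hEq; linarith
        have step : TwoFinalExp ((a - 1) :: A₀, B₀) (a :: A₀, B₀ ++ [2]) := by
          left
          exact ⟨a - 1, A₀, B₀, rfl, by norm_num⟩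
        refine Relation.ReflTransGen.tail (ih ((a - 1) :: A₀) B₀ ?_ (by simp) hB₀ne ?_ h2B₀ ?_ ?_) step
        · rw [nc4_cons]; dsimp only; ring_nf; ring_nf at hn; linarith
        · intro x hx
          rcases List.mem_cons.1 hx with rfl | hx
          · omega
          · exact h2A₀ x hx
        · rw [nc4_cons]; dsimp only; ring_nf; ring_nf at hInv; linarith
        · rw [nc4_cons]; dsimp only; ring_nf; ring_nf at hEq hInv; linarith

/-- Let `a₁,…,aₙ` (`n ≥ 1`) be integers with each `aᵢ ≥ 2`, and set
`p = K(a₁,…,aₙ)`, `q = K(a₂,…,aₙ)`.  Then the string `(a₁,…,aₙ)` is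
self-complementary if and only if `q² ≡ −1 (mod p)`. -/
theorem stmt9 (L : List ℤ) (hL : L ≠ []) (h2 : ∀ a ∈ L, 2 ≤ a) :
    Complementary L L ↔ (negCont L.tail) ^ 2 ≡ -1 [ZMOD negCont L] := by
  have hp := nc4_p L
  have hq := nc4_q L hL
  obtain ⟨hq1, hqp, hr1, hrp, ht0, htq, htr, h8⟩ := nc4_bounds L hL h2
  have hdet := nc4_det L
  rw [← hp, ← hq]
  constructor
  · intro hC
    obtain ⟨-, -, -, -, -, hInv⟩ := comp_inv hC
    dsimp only at hInv
    refine Int.modEq_iff_dvd.2 ⟨(nc4 L).2.2.2 - (nc4 L).2.2.1, ?_⟩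
    linear_combination hdet - (nc4 L).2.2.1 * hInv
  · intro hm
    obtain ⟨k, hk⟩ := Int.modEq_iff_dvd.1 hm
    have hcop : IsCoprime (nc4 L).1 (nc4 L).2.2.1 :=
      ⟨-(nc4 L).2.2.2, (nc4 L).2.1, by linear_combination hdet⟩
    have hdvd2 : (nc4 L).1 ∣ (nc4 L).2.2.1 * ((nc4 L).2.1 - (nc4 L).1 + (nc4 L).2.2.1) :=
      ⟨(nc4 L).2.2.2 - (nc4 L).2.2.1 - k, by linear_combination hdet - hk⟩
    have hz : (nc4 L).2.1 - (nc4 L).1 + (nc4 L).2.2.1 = 0 := by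
      have hd := hcop.dvd_of_dvd_mul_left hdvd2
      have habs : |(nc4 L).2.1 - (nc4 L).1 + (nc4 L).2.2.1| < (nc4 L).1 := by
        rw [abs_lt]; constructor <;> linarith
      exact Int.eq_zero_of_abs_lt_dvd hd habs
    exact star (nc4 L).1.toNat L L (by rw [Int.toNat_of_nonneg (by linarith)]) hL hL h2 h2 rfl
      (by linarith)
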